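/- Define a_i = ⌊(i+1)mε⌋ and b_i = ⌊(i+1)mε⌋ + ⌊i(n−m)ε⌋ where ε = 1/(m(n−m)), m, n positive integers with m < n, both divisible by some a ≥ 2. Then for every positive integer i, the difference (a_i, b_i) − (a_{i−1}, b_{i−1}) belongs to {(0,0), (0,1), (1,1)}. -/

import Mathlib

/-- `a_i = ⌊(i+1)mε⌋` with `ε = 1/(m(n-m))`. -/
def aSeq (m n : ℕ) (i : ℕ) : ℤ :=
  ⌊((i : ℚ) + 1) * (m : ℚ) * (1 / ((m : ℚ) * ((n : ℚ) - m)))⌋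

/-- `b_i = a_i + ⌊i(n-m)ε⌋`. -/
def bSeq (m n : ℕ) (i : ℕ) : ℤ :=
  aSeq m n i + ⌊(i : ℚ) * ((n : ℚ) - m) * (1 / ((m : ℚ) * ((n : ℚ) - m)))⌋

lemma aSeq_eq (m n : ℕ) (hm : 0 < m) (hmn : m < n) (i : ℕ) :
    aSeq m n i = ((i + 1) / (n - m) : ℕ) := by
  have hnm : ((n - m : ℕ) : ℚ) = (n : ℚ) - m := by
    push_cast [Nat.cast_sub hmn.le]; ring
  have hnm0 : (0 : ℚ) < (n : ℚ) - m := by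
    have : (m : ℚ) < n := by exact_mod_cast hmn
    linarith
  have : ((i : ℚ) + 1) * (m : ℚ) * (1 / ((m : ℚ) * ((n : ℚ) - m)))
      = ((i + 1 : ℕ) : ℚ) / ((n - m : ℕ) : ℚ) := by
    rw [hnm]
    have hm0 : (m : ℚ) ≠ 0 := by positivity
    field_simp
    push_cast; ring
  rw [aSeq, this, Rat.floor_natCast_div_natCast]
  exact (Int.natCast_ediv _ _).symm

lemma bSnd_eq (m n : ℕ) (hm : 0 < m) (hmn : m < n) (i : ℕ) :
    ⌊(i : ℚ) * ((n : ℚ) - m) * (1 / ((m : ℚ) * ((n : ℚ) - m)))⌋ = (i / m : ℕ) := by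
  have hnm0 : (0 : ℚ) < (n : ℚ) - m := by
    have : (m : ℚ) < n := by exact_mod_cast hmn
    linarith
  have hm0 : (0 : ℚ) < (m : ℚ) := by exact_mod_cast hm
  have : (i : ℚ) * ((n : ℚ) - m) * (1 / ((m : ℚ) * ((n : ℚ) - m)))
      = ((i : ℕ) : ℚ) / ((m : ℕ) : ℚ) := by
    field_simp
  rw [this, Rat.floor_natCast_div_natCast]
  exact (Int.natCast_ediv _ _).symm

/-- `(a_i, b_i) - (a_{i-1}, b_{i-1}) ∈ {(0,0), (0,1), (1,1)}`. -/
theorem stmt4 (m n a : ℕ) (hm : 0 < m) (hmn : m < n) (ha : 2 ≤ a)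
    (h1 : a ∣ m) (h2 : a ∣ n) (i : ℕ) (hi : 0 < i) :
    (aSeq m n i - aSeq m n (i - 1), bSeq m n i - bSeq m n (i - 1)) ∈
      ({(0, 0), (0, 1), (1, 1)} : Set (ℤ × ℤ)) := by
  obtain ⟨j, rfl⟩ : ∃ j, i = j + 1 := ⟨i - 1, (Nat.succ_pred_eq_of_pos hi).symm⟩
  simp only [Nat.add_sub_cancel]
  rw [bSeq, bSeq, aSeq_eq m n hm hmn, aSeq_eq m n hm hmn,
    bSnd_eq m n hm hmn, bSnd_eq m n hm hmn]
  have hnm : a ∣ n - m := (Nat.dvd_sub h2 h1)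
  have key : ¬ ((n - m) ∣ (j + 1 + 1) ∧ m ∣ (j + 1)) := by
    rintro ⟨hd1, hd2⟩
    have ha1 : a ∣ j + 1 := h1.trans hd2
    have ha2 : a ∣ j + 2 := hnm.trans hd1
    have h3 : a ∣ 1 := by simpa using Nat.dvd_sub ha2 ha1
    have := Nat.le_of_dvd one_pos h3
    omega
  rw [Nat.succ_div (a := j+1) (b := n-m), Nat.succ_div (a := j) (b := m)]
  by_cases hd1 : (n - m) ∣ (j + 1 + 1) <;> by_cases hd2 : m ∣ (j + 1) <;>
    simp [hd1, hd2] at key ⊢ <;> push_cast <;> ring_nf <;> simp
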